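/- Let V = {v₀,...,v_{2p−1}} ∪ {u₀,...,u_{k−1}} and let f : V × [k] → V satisfy: f(u_i, 0) = v₀ and f(u_i, j) = u_{i+j mod k} for j ≥ 1; and for each i ∈ [p] there exist j₀, j₁ ∈ [k] and a bit b with f(v_{2i}, j₀) = v_{2i+2+b mod 2p}, f(v_{2i+1}, j₁) = v_{2i+3−b mod 2p}, all other values f(v_{2i}, j), f(v_{2i+1}, j) lying in {u₀,...,u_{k−1}}. Then the directed graph with edges {(v, f(v,j)) : v ∈ V, j ∈ [k]} is strongly connected if and only if v₁ is reachable from v₀. -/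
import Mathlib


/-- The graph used in the `Ω(n√k)` lower bound for Strong Connectivity in the
list model.  Vertices are `v₀,…,v_{2p-1}` (`Sum.inl`) and the clique vertices
`u₀,…,u_{k-1}` (`Sum.inr`); `f v j` is the `j`-th out-neighbor of `v`.  The
clique vertices point to each other and to `v₀`; at each level `i` there are
forward edges `v_{2i} → v_{2i+2+b}` and `v_{2i+1} → v_{2i+3-b}` (mod `2p`) for
some bit `b`, and all other out-edges of `v_{2i}`, `v_{2i+1}` go back into the
clique.  Then the resulting directed graph is strongly connected iff `v₁` is
reachable from `v₀`. -/
theorem list_model_strongly_connected_iff_v1_reachable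
    (p k : ℕ) (hp : 1 ≤ p) (hk : 2 ≤ k)
    (f : (Fin (2 * p) ⊕ Fin k) → Fin k → (Fin (2 * p) ⊕ Fin k))
    (hclique0 : ∀ i : Fin k, f (Sum.inr i) ⟨0, by omega⟩ = Sum.inl ⟨0, by omega⟩)
    (hclique : ∀ i j : Fin k, j ≠ ⟨0, by omega⟩ →
      f (Sum.inr i) j = Sum.inr (i + j))
    (hlevels : ∀ i : Fin p, ∃ j₀ j₁ : Fin k, ∃ b : Bool,
      f (Sum.inl ⟨2 * i.val, by omega⟩) j₀ =
        Sum.inl ⟨(2 * i.val + 2 + b.toNat) % (2 * p), Nat.mod_lt _ (by omega)⟩ ∧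
      f (Sum.inl ⟨2 * i.val + 1, by omega⟩) j₁ =
        Sum.inl ⟨(2 * i.val + 3 - b.toNat) % (2 * p), Nat.mod_lt _ (by omega)⟩ ∧
      (∀ j : Fin k, j ≠ j₀ → ∃ u : Fin k,
        f (Sum.inl ⟨2 * i.val, by omega⟩) j = Sum.inr u) ∧
      (∀ j : Fin k, j ≠ j₁ → ∃ u : Fin k,
        f (Sum.inl ⟨2 * i.val + 1, by omega⟩) j = Sum.inr u)) :
    (∀ u v : Fin (2 * p) ⊕ Fin k,
        Relation.ReflTransGen (fun s t => ∃ j, f s j = t) u v) ↔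
      Relation.ReflTransGen (fun s t => ∃ j, f s j = t)
        (Sum.inl ⟨0, by omega⟩) (Sum.inl ⟨1, by omega⟩) := by
  have hp2 : 0 < 2 * p := by omega
  constructor
  · intro h; exact h _ _
  · intro hv1 u v
    haveI : NeZero k := ⟨by omega⟩
    set R : (Fin (2*p) ⊕ Fin k) → (Fin (2*p) ⊕ Fin k) → Prop :=
      Relation.ReflTransGen (fun s t => ∃ j, f s j = t) with hR
    show R u v
    have v0eq : (Sum.inl ⟨0, hp2⟩ : Fin (2*p) ⊕ Fin k) = Sum.inl ⟨0, by omega⟩ := rfl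
    -- there always exists j ≠ j₀
    have hne : ∀ j₀ : Fin k, ∃ j : Fin k, j ≠ j₀ := by
      haveI : Nontrivial (Fin k) := Fin.nontrivial_iff_two_le.mpr hk
      exact fun j₀ => exists_ne j₀
    -- clique vertices reach each other
    have hcr : ∀ a b : Fin k, R (Sum.inr a) (Sum.inr b) := by
      intro a b
      by_cases h : a = b
      · subst h; exact .refl
      · refine Relation.ReflTransGen.single ⟨b - a, ?_⟩
        rw [hclique a (b - a) ?_]
        · rw [add_sub_cancel]
        · intro h0
          apply h
          have h0' : b - a = 0 := by
            rw [h0]; exact Fin.ext (by simp)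
          have := sub_eq_zero.mp h0'
          exact this.symm
    -- clique vertices reach v0
    have hu0 : ∀ a : Fin k, R (Sum.inr a) (Sum.inl ⟨0, hp2⟩) :=
      fun a => Relation.ReflTransGen.single ⟨⟨0, by omega⟩, hclique0 a⟩
    -- all level vertices reach v0
    have hl0 : ∀ l : Fin (2*p), R (Sum.inl l) (Sum.inl ⟨0, hp2⟩) := by
      intro l
      have hi : l.val / 2 < p := by omega
      obtain ⟨j₀, j₁, b, e0, e1, h2, h3⟩ := hlevels ⟨l.val / 2, hi⟩
      rcases Nat.mod_two_eq_zero_or_one l.val with hm | hm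
      · have hl : l = ⟨2 * (l.val / 2), by omega⟩ := Fin.ext (by simp; omega)
        obtain ⟨j, hj⟩ := hne j₀
        obtain ⟨w, hw⟩ := h2 j hj
        rw [hl]
        exact (Relation.ReflTransGen.single ⟨j, hw⟩).trans (hu0 w)
      · have hl : l = ⟨2 * (l.val / 2) + 1, by omega⟩ := Fin.ext (by simp; omega)
        obtain ⟨j, hj⟩ := hne j₁
        obtain ⟨w, hw⟩ := h3 j hj
        rw [hl]
        exact (Relation.ReflTransGen.single ⟨j, hw⟩).trans (hu0 w)
    -- transport along Fin equality
    have key : ∀ a b : Fin (2*p), a.val = b.val →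
        R (Sum.inl ⟨0, hp2⟩) (Sum.inl a) → R (Sum.inl ⟨0, hp2⟩) (Sum.inl b) := by
      intro a b hab h
      have : a = b := Fin.ext hab
      rwa [this] at h
    -- v0 reaches all levels
    have hfwd : ∀ i : ℕ, ∀ hi : i < p,
        R (Sum.inl ⟨0, hp2⟩) (Sum.inl ⟨2*i, by omega⟩) ∧
        R (Sum.inl ⟨0, hp2⟩) (Sum.inl ⟨2*i+1, by omega⟩) := by
      intro i
      induction i with
      | zero =>
        intro hi
        constructor
        · exact key ⟨0, hp2⟩ _ (by simp) .refl
        · exact key ⟨1, by omega⟩ _ (by simp) hv1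
      | succ n ih =>
        intro hi
        have hn' : n < p := by omega
        obtain ⟨h2n, h2n1⟩ := ih hn'
        obtain ⟨j₀, j₁, b, e0, e1, _, _⟩ := hlevels ⟨n, hn'⟩
        have t0 := h2n.trans (Relation.ReflTransGen.single ⟨j₀, e0⟩)
        have t1 := h2n1.trans (Relation.ReflTransGen.single ⟨j₁, e1⟩)
        have hm0 : (2*n+2+b.toNat) % (2*p) = 2*n+2+b.toNat :=
          Nat.mod_eq_of_lt (by cases b <;> simp <;> omega)
        have hm1 : (2*n+3-b.toNat) % (2*p) = 2*n+3-b.toNat :=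
          Nat.mod_eq_of_lt (by cases b <;> simp <;> omega)
        cases b with
        | false =>
          refine ⟨key _ _ ?_ t0, key _ _ ?_ t1⟩
          · show (2*n+2+Bool.toNat false) % (2*p) = 2*(n+1)
            rw [hm0]; simp only [Bool.toNat_false]; omega
          · show (2*n+3-Bool.toNat false) % (2*p) = 2*(n+1)+1
            rw [hm1]; simp only [Bool.toNat_false]; omega
        | true =>
          refine ⟨key _ _ ?_ t1, key _ _ ?_ t0⟩
          · show (2*n+3-Bool.toNat true) % (2*p) = 2*(n+1)
            rw [hm1]; simp only [Bool.toNat_true]; omega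
          · show (2*n+2+Bool.toNat true) % (2*p) = 2*(n+1)+1
            rw [hm0]; simp only [Bool.toNat_true]; omega
    have hv0l : ∀ l : Fin (2*p), R (Sum.inl ⟨0, hp2⟩) (Sum.inl l) := by
      intro l
      have hi : l.val / 2 < p := by omega
      obtain ⟨ha, hb⟩ := hfwd (l.val / 2) hi
      rcases Nat.mod_two_eq_zero_or_one l.val with hm | hm
      · exact key _ _ (by simp; omega) ha
      · exact key _ _ (by simp; omega) hb
    -- v0 reaches the clique
    have hv0c : ∀ a : Fin k, R (Sum.inl ⟨0, hp2⟩) (Sum.inr a) := by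
      obtain ⟨j₀, j₁, b, e0, e1, h2, h3⟩ := hlevels ⟨0, by omega⟩
      obtain ⟨j, hj⟩ := hne j₀
      obtain ⟨w, hw⟩ := h2 j hj
      intro a
      have step : R (Sum.inl ⟨0, hp2⟩) (Sum.inr w) := by
        refine Relation.ReflTransGen.single ⟨j, ?_⟩
        have : (⟨0, hp2⟩ : Fin (2*p)) = ⟨2 * (0:ℕ), by omega⟩ := Fin.ext (by simp)
        rw [this]
        exact hw
      exact step.trans (hcr w a)
    -- everything reaches v0
    have hto : ∀ w : Fin (2*p) ⊕ Fin k, R w (Sum.inl ⟨0, hp2⟩) := by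
      rintro (l | a)
      · exact hl0 l
      · exact hu0 a
    have hfrom : ∀ w : Fin (2*p) ⊕ Fin k, R (Sum.inl ⟨0, hp2⟩) w := by
      rintro (l | a)
      · exact hv0l l
      · exact hv0c a
    exact (hto u).trans (hfrom v)
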